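/- Let u ≥ 0, l ≤ 0 with u > l, let C ≥ 0 and q be real numbers. Define g(π, γ) = -max(0, uγ + lπ + q) + lπ on the set {(π, γ) : π ≥ 0, γ ≥ 0, π + γ = C}. Then the maximum of g over this set equals: l·π* if -uC ≤ q ≤ -lC; 0 if q < -uC; and -q if q > -lC, where π* = max(min((uC + q)/(u - l), C), 0). -/

import Mathlib

theorem gcp_crown_lemma_A1
    (u l C q : ℝ) (hu : 0 ≤ u) (hl : l ≤ 0) (hul : l < u) (hC : 0 ≤ C)
    (g : ℝ → ℝ → ℝ) (hg : ∀ π γ, g π γ = -max 0 (u * γ + l * π + q) + l * π)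
    (S : Set ℝ) (hS : S = {v | ∃ π γ, 0 ≤ π ∧ 0 ≤ γ ∧ π + γ = C ∧ v = g π γ})
    (πstar : ℝ) (hπ : πstar = max (min ((u * C + q) / (u - l)) C) 0) :
    (-u * C ≤ q → q ≤ -l * C → IsGreatest S (l * πstar)) ∧
    (q < -u * C → IsGreatest S 0) ∧
    (-l * C < q → IsGreatest S (-q)) := by
  subst hS hπ
  have hune : (0:ℝ) < u - l := by linarith
  refine ⟨?_, ?_, ?_⟩
  · intro h1 h2
    set p := (u * C + q) / (u - l) with hp
    have hpval : (u - l) * p = u * C + q := by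
      rw [hp]; field_simp [hune.ne']
    have hp0 : 0 ≤ p := div_nonneg (by linarith) (le_of_lt hune)
    have hpC : p ≤ C := by
      rw [hp, div_le_iff₀ hune]; nlinarith
    have hπeq : max (min p C) 0 = p := by
      rw [min_eq_left hpC, max_eq_left hp0]
    rw [hπeq]
    constructor
    · refine ⟨p, C - p, hp0, by linarith, by ring, ?_⟩
      rw [hg]
      have harg : u * (C - p) + l * p + q = 0 := by nlinarith [hpval]
      rw [harg]; simp
    · rintro v ⟨π, γ, hπ0, hγ0, hsum, rfl⟩
      rw [hg]
      rcases le_or_gt π p with h | h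
      · have hpos : 0 ≤ u * γ + l * π + q := by nlinarith
        rw [max_eq_right hpos]; nlinarith
      · rcases le_or_gt (u * γ + l * π + q) 0 with h2' | h2'
        · rw [max_eq_left h2']; nlinarith
        · rw [max_eq_right (le_of_lt h2')]; nlinarith
  · intro h1
    constructor
    · refine ⟨0, C, le_refl _, hC, by ring, ?_⟩
      rw [hg]
      have : u * C + l * 0 + q ≤ 0 := by nlinarith
      rw [max_eq_left this]; ring
    · rintro v ⟨π, γ, hπ0, hγ0, hsum, rfl⟩
      rw [hg]
      have : u * γ + l * π + q ≤ 0 := by nlinarith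
      rw [max_eq_left this]; nlinarith
  · intro h1
    constructor
    · refine ⟨C, 0, hC, le_refl _, by ring, ?_⟩
      rw [hg]
      have : 0 ≤ u * 0 + l * C + q := by nlinarith
      rw [max_eq_right this]; ring
    · rintro v ⟨π, γ, hπ0, hγ0, hsum, rfl⟩
      rw [hg]
      rcases le_or_gt (u * γ + l * π + q) 0 with h2' | h2'
      · rw [max_eq_left h2']; nlinarith
      · rw [max_eq_right (le_of_lt h2')]; nlinarith
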